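/- Let s ≥ 2 and 1 ≤ ℓ ≤ C(s,2) be integers, and let m_1, ..., m_ℓ be integers with 2 ≤ m_j ≤ s for all j satisfying ∑_{j=1}^ℓ C(m_j, 2) = C(s, 2). Then ∑_{j=1}^ℓ (m_j - 1 - log_3 m_j) ≥ s - 1 - log_3 s, with equality if and only if ℓ = 1 and m_1 = s. -/

import Mathlib

lemma aux_pow (m : ℕ) (hm : 2 ≤ m) : m^(m+1) < (3*(m+1))^(m-1) := by
  rcases eq_or_lt_of_le hm with h | h
  · subst h; norm_num
  · have hm3 : 3 ≤ m := h
    have h1 : ∀ n, 3 ≤ n → n^2 ≤ 3^(n-1) := by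
      intro n hn
      induction n, hn using Nat.le_induction with
      | base => norm_num
      | succ k hk ih =>
        have : (k+1)^2 ≤ 3 * k^2 := by nlinarith
        calc (k+1)^2 ≤ 3 * k^2 := this
          _ ≤ 3 * 3^(k-1) := by exact Nat.mul_le_mul_left _ ih
          _ = 3^(k-1+1) := by ring
          _ = 3^(k+1-1) := by congr 1; omega
    have h2 : m^(m-1) < (m+1)^(m-1) := by
      apply Nat.pow_lt_pow_left (by omega)
      omega
    calc m^(m+1) = m^2 * m^(m-1) := by rw [← pow_add]; congr 1; omega
      _ < m^2 * (m+1)^(m-1) := by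
          have : 0 < m^2 := by positivity
          exact Nat.mul_lt_mul_of_le_of_lt (le_refl _) h2 this
      _ ≤ 3^(m-1) * (m+1)^(m-1) := Nat.mul_le_mul_right _ (h1 m hm3)
      _ = (3*(m+1))^(m-1) := (mul_pow 3 (m+1) (m-1)).symm

lemma aux_logb (m : ℕ) (hm : 2 ≤ m) :
    ((m:ℝ)+1) * Real.logb 3 m < ((m:ℝ)-1) * (1 + Real.logb 3 ((m:ℝ)+1)) := by
  have hmpos : (0:ℝ) < (m:ℝ) := by positivity
  have hcast : ((m:ℝ))^(m+1) < ((3:ℝ)*((m:ℝ)+1))^(m-1) := by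
    have h := Nat.cast_lt (α := ℝ) |>.mpr (aux_pow m hm)
    push_cast at h
    exact h
  have h3 : (1:ℝ) < 3 := by norm_num
  have hlog := Real.logb_lt_logb h3 (by positivity) hcast
  rw [Real.logb_pow, Real.logb_pow, Real.logb_mul (by norm_num) (by positivity),
    Real.logb_self_eq_one h3] at hlog
  have hc1 : ((m+1 : ℕ) : ℝ) = (m:ℝ)+1 := by push_cast; ring
  have hc2 : ((m-1 : ℕ) : ℝ) = (m:ℝ)-1 := by
    have : 1 ≤ m := by omega
    push_cast [this]; ring
  rw [hc1, hc2] at hlog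
  linarith

noncomputable def uval (n : ℕ) : ℝ :=
  ((n:ℝ) - 1 - Real.logb 3 n) / ((n:ℝ) * ((n:ℝ) - 1))

lemma uval_step (m : ℕ) (hm : 2 ≤ m) : uval (m+1) < uval m := by
  have hm1 : (2:ℝ) ≤ (m:ℝ) := by exact_mod_cast hm
  have hd1 : (0:ℝ) < (m:ℝ) * ((m:ℝ) - 1) := by nlinarith
  have h := aux_logb m hm
  unfold uval
  rw [div_lt_div_iff₀ (by push_cast; nlinarith) hd1]
  push_cast
  nlinarith [h]

lemma uval_anti (a b : ℕ) (ha : 2 ≤ a) (hab : a ≤ b) : uval b ≤ uval a := by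
  induction b, hab using Nat.le_induction with
  | base => exact le_refl _
  | succ k hk ih => exact le_trans (le_of_lt (uval_step k (by omega))) ih

lemma uval_strict_anti (a b : ℕ) (ha : 2 ≤ a) (hab : a < b) : uval b < uval a := by
  have := uval_anti (a+1) b (by omega) (by omega)
  exact lt_of_le_of_lt this (uval_step a ha)

lemma fval_eq (n : ℕ) (hn : 2 ≤ n) :
    (n:ℝ) - 1 - Real.logb 3 n = uval n * ((n:ℝ) * ((n:ℝ) - 1)) := by
  have hn1 : (2:ℝ) ≤ (n:ℝ) := by exact_mod_cast hn
  have hd : ((n:ℝ) * ((n:ℝ) - 1)) ≠ 0 := by nlinarith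
  unfold uval
  rw [div_mul_cancel₀ _ hd]

theorem stmt_15 (s ℓ : ℕ) (hs : 2 ≤ s) (hl1 : 1 ≤ ℓ) (hl2 : ℓ ≤ s.choose 2)
    (m : Fin ℓ → ℕ) (hm : ∀ j, 2 ≤ m j ∧ m j ≤ s)
    (hsum : (∑ j, (m j).choose 2) = s.choose 2) :
    ((s : ℝ) - 1 - Real.logb 3 (s : ℝ) ≤
      ∑ j, ((m j : ℝ) - 1 - Real.logb 3 (m j : ℝ))) ∧
    ((∑ j, ((m j : ℝ) - 1 - Real.logb 3 (m j : ℝ))) =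
        (s : ℝ) - 1 - Real.logb 3 (s : ℝ) ↔
      ℓ = 1 ∧ ∀ j, m j = s) := by
  have hsumR : ∑ j, ((m j:ℝ) * ((m j:ℝ) - 1)) = (s:ℝ) * ((s:ℝ) - 1) := by
    have h := congrArg (Nat.cast : ℕ → ℝ) hsum
    push_cast [Nat.cast_choose_two] at h
    have h2 : ∑ j, ((m j:ℝ) * ((m j:ℝ) - 1)) / 2 = (s:ℝ) * ((s:ℝ) - 1) / 2 := by
      convert h using 2
    rw [← Finset.sum_div] at h2
    linarith
  have hterm : ∀ j, uval s * ((m j:ℝ) * ((m j:ℝ) - 1)) ≤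
      ((m j:ℝ) - 1 - Real.logb 3 (m j)) := by
    intro j
    rw [fval_eq _ (hm j).1]
    apply mul_le_mul_of_nonneg_right (uval_anti _ _ (hm j).1 (hm j).2)
    have : (2:ℝ) ≤ (m j:ℝ) := by exact_mod_cast (hm j).1
    nlinarith
  have hchain : (s:ℝ) - 1 - Real.logb 3 s
      = ∑ j, uval s * ((m j:ℝ) * ((m j:ℝ) - 1)) := by
    rw [fval_eq s hs, ← hsumR, Finset.mul_sum]
  have hlb : (s:ℝ) - 1 - Real.logb 3 s ≤
      ∑ j, ((m j:ℝ) - 1 - Real.logb 3 (m j)) := by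
    rw [hchain]
    exact Finset.sum_le_sum (fun j _ => hterm j)
  refine ⟨hlb, ?_, ?_⟩
  · intro heq
    have hall : ∀ j, m j = s := by
      by_contra hc
      push_neg at hc
      obtain ⟨j0, hj0⟩ := hc
      have hlt : m j0 < s := lt_of_le_of_ne (hm j0).2 hj0
      have hstrict : uval s * ((m j0:ℝ) * ((m j0:ℝ) - 1)) <
          ((m j0:ℝ) - 1 - Real.logb 3 (m j0)) := by
        rw [fval_eq _ (hm j0).1]
        apply mul_lt_mul_of_pos_right (uval_strict_anti _ _ (hm j0).1 hlt)
        have : (2:ℝ) ≤ (m j0:ℝ) := by exact_mod_cast (hm j0).1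
        nlinarith
      have := Finset.sum_lt_sum (fun i _ => hterm i) ⟨j0, Finset.mem_univ _, hstrict⟩
      rw [← hchain, heq] at this
      exact lt_irrefl _ this
    refine ⟨?_, hall⟩
    have hs2 : 0 < s.choose 2 := Nat.choose_pos hs
    have h1 : ∑ j : Fin ℓ, (m j).choose 2 = ℓ * s.choose 2 := by
      simp [hall, Finset.sum_const]
    rw [h1] at hsum
    have h2 : ℓ * s.choose 2 = 1 * s.choose 2 := by rw [one_mul]; exact hsum
    exact Nat.eq_of_mul_eq_mul_right hs2 h2
  · rintro ⟨hl, hms⟩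
    have : ∑ j, ((m j:ℝ) - 1 - Real.logb 3 (m j)) =
        ∑ j : Fin ℓ, ((s:ℝ) - 1 - Real.logb 3 s) :=
      Finset.sum_congr rfl (fun j _ => by rw [hms j])
    rw [this]
    simp [hl]
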